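/- arXiv:2005.10989 — 2 statements merged into one kernel-verified Lean document; each statement's English description precedes it below -/
import Mathlib

section
/- For a finite group G there exists a finite subset P = {β₁, …, β_t} of B = Perm(G) such that: (i) the map β_i ↦ β_i λ(G) β_i⁻¹ is a bijection from P onto S(G) ∩ R(G); (ii) the left cosets β₁Hol(G), …, β_tHol(G) are pairwise distinct, and the right cosets Hol(G)β₁, …, Hol(G)β_t are pairwise distinct with ⋃_{i=1}^t β_i Hol(G) = ⋃_{i=1}^t Hol(G) β_i; (iii) there is a permutation σ of {1,…,t} with β_i⁻¹ λ(G) β_i = β_{σ(i)} λ(G) β_{σ(i)}⁻¹ for every i. -/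
open Equiv Pointwise

/-- A subgroup `N ≤ Perm X` is regular if for all `x y : X` there is exactly one
element of `N` sending `x` to `y`. -/
def IsRegularSubgroup {X : Type*} (N : Subgroup (Equiv.Perm X)) : Prop :=
  ∀ x y : X, ∃! η : N, (η : Equiv.Perm X) x = y

/-- The image `λ(G)` of the left regular representation `λ : G → Perm G`. -/
def lamG (G : Type*) [Group G] : Subgroup (Equiv.Perm G) :=
  (MulAction.toPermHom G G).range

/-- The holomorph `Hol(G) = Norm_B(λ(G))`. -/
def Hol (G : Type*) [Group G] : Subgroup (Equiv.Perm G) :=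
  Subgroup.normalizer (lamG G : Set (Equiv.Perm G))

/-- `H(G)`: regular subgroups isomorphic to `G` whose normalizer is `Hol(G)`. -/
def HClass (G : Type*) [Group G] : Set (Subgroup (Equiv.Perm G)) :=
  {N | IsRegularSubgroup N ∧ Nonempty (N ≃* G) ∧ Subgroup.normalizer (N : Set (Equiv.Perm G)) = Hol G}

/-- `S(G)`: regular subgroups isomorphic to `G` contained in `Hol(G)`. -/
def SClass (G : Type*) [Group G] : Set (Subgroup (Equiv.Perm G)) :=
  {N | IsRegularSubgroup N ∧ Nonempty (N ≃* G) ∧ N ≤ Hol G}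

/-- `R(G)`: regular subgroups isomorphic to `G` normalized by `λ(G)`. -/
def RClass (G : Type*) [Group G] : Set (Subgroup (Equiv.Perm G)) :=
  {N | IsRegularSubgroup N ∧ Nonempty (N ≃* G) ∧ lamG G ≤ Subgroup.normalizer (N : Set (Equiv.Perm G))}

/-- `Q(G)`: members of `S(G) ∩ R(G)` normalized by every member of `S(G) ∩ R(G)`. -/
def QClass (G : Type*) [Group G] : Set (Subgroup (Equiv.Perm G)) :=
  {M ∈ SClass G ∩ RClass G | ∀ N ∈ SClass G ∩ RClass G, N ≤ Subgroup.normalizer (M : Set (Equiv.Perm G))}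

/-- Conjugate of a subgroup: `b N b⁻¹`. -/
def conjSub {H : Type*} [Group H] (b : H) (N : Subgroup H) : Subgroup H :=
  Subgroup.map (MulAut.conj b).toMonoidHom N

set_option linter.unusedSectionVars false

section ConjSubAux
variable {H : Type*} [Group H] (b c : H) (N M : Subgroup H)

lemma mem_conjSub {b x : H} {N : Subgroup H} :
    x ∈ conjSub b N ↔ ∃ n ∈ N, b * n * b⁻¹ = x := by
  simp [conjSub, Subgroup.mem_map, MulAut.conj_apply]

lemma conjSub_conjSub : conjSub b (conjSub c N) = conjSub (b * c) N := by
  unfold conjSub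
  rw [Subgroup.map_map]
  congr 1
  ext x
  simp [MulAut.conj_apply, mul_assoc]

lemma conjSub_one : conjSub (1 : H) N = N := by
  unfold conjSub
  ext x
  simp [Subgroup.mem_map, MulAut.conj_apply]

lemma conjSub_mono (h : N ≤ M) : conjSub b N ≤ conjSub b M :=
  Subgroup.map_mono h

lemma normalizer_conjSub : Subgroup.normalizer (conjSub b N : Set H) = conjSub b (Subgroup.normalizer (N : Set H)) :=
  (Subgroup.map_equiv_normalizer_eq N (MulAut.conj b)).symm

lemma conjSub_eq_self_iff {b : H} {N : Subgroup H} :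
    conjSub b N = N ↔ b ∈ Subgroup.normalizer (N : Set H) := by
  constructor
  · intro h
    rw [Subgroup.mem_normalizer_iff]
    intro n
    constructor
    · intro hn
      rw [← h]; exact mem_conjSub.mpr ⟨n, hn, rfl⟩
    · intro hn
      rw [← h] at hn
      obtain ⟨m, hm, heq⟩ := mem_conjSub.mp hn
      have : m = n := by
        have := mul_right_cancel heq
        exact mul_left_cancel this
      rwa [← this]
  · intro hb
    rw [Subgroup.mem_normalizer_iff] at hb
    ext x
    rw [mem_conjSub]
    constructor
    · rintro ⟨n, hn, rfl⟩
      exact (hb n).mp hn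
    · intro hx
      refine ⟨b⁻¹ * x * b, ?_, by group⟩
      rw [hb (b⁻¹ * x * b)]
      have : b * (b⁻¹ * x * b) * b⁻¹ = x := by group
      rwa [this]

lemma conjSub_eq_conjSub_iff {b c : H} {N : Subgroup H} :
    conjSub b N = conjSub c N ↔ c⁻¹ * b ∈ Subgroup.normalizer (N : Set H) := by
  rw [← conjSub_eq_self_iff (b := c⁻¹ * b)]
  constructor
  · intro h
    rw [← conjSub_conjSub, h, conjSub_conjSub, inv_mul_cancel, conjSub_one]
  · intro h
    have := congrArg (conjSub c) h
    rwa [conjSub_conjSub, mul_inv_cancel_left] at this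

end ConjSubAux

section LamGAux
variable {G : Type*} [Group G]

lemma lam_apply (g h : G) : (MulAction.toPermHom G G g) h = g * h := rfl

lemma lam_injective : Function.Injective (MulAction.toPermHom G G) := by
  intro g g' h
  have := congrArg (fun f : Equiv.Perm G => f 1) h
  simpa [lam_apply] using this

lemma lamG_regular : IsRegularSubgroup (lamG G) := by
  intro x y
  refine ⟨⟨MulAction.toPermHom G G (y * x⁻¹), ⟨_, rfl⟩⟩, ?_, ?_⟩
  · simp [lam_apply]
  · rintro ⟨η, g, rfl⟩ h
    simp only [lam_apply] at h
    have : g = y * x⁻¹ := by rw [← h]; group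
    subst this
    rfl

noncomputable def lamGIso : (lamG G) ≃* G :=
  (MonoidHom.ofInjective (lam_injective (G := G))).symm

lemma isRegular_conjSub {N : Subgroup (Equiv.Perm G)} (hN : IsRegularSubgroup N)
    (b : Equiv.Perm G) : IsRegularSubgroup (conjSub b N) := by
  intro x y
  obtain ⟨η, hη, huniq⟩ := hN (b⁻¹ x) (b⁻¹ y)
  have hmem : b * (η : Equiv.Perm G) * b⁻¹ ∈ conjSub b N := mem_conjSub.mpr ⟨η, η.2, rfl⟩
  refine ⟨⟨b * (η : Equiv.Perm G) * b⁻¹, hmem⟩, ?_, ?_⟩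
  · show (b * (η : Equiv.Perm G) * b⁻¹) x = y
    have : (b * (η : Equiv.Perm G) * b⁻¹) x = b ((η : Equiv.Perm G) (b⁻¹ x)) := rfl
    rw [this, hη]
    simp
  · rintro ⟨ζ, hζ⟩ hzx
    obtain ⟨n, hn, rfl⟩ := mem_conjSub.mp hζ
    have hx : (⟨n, hn⟩ : N) = η := by
      apply huniq
      show n (b⁻¹ x) = b⁻¹ y
      have : (b * n * b⁻¹) x = b (n (b⁻¹ x)) := rfl
      rw [this] at hzx
      have := congrArg (fun z => (b⁻¹ : Equiv.Perm G) z) hzx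
      simpa using this
    apply Subtype.ext
    show b * n * b⁻¹ = b * (η : Equiv.Perm G) * b⁻¹
    rw [← hx]

noncomputable def conjSubIso (b : Equiv.Perm G) (N : Subgroup (Equiv.Perm G)) :
    N ≃* conjSub b N :=
  Subgroup.equivMapOfInjective N _ (MulEquiv.injective (MulAut.conj b))

/-- every regular subgroup isomorphic to `G` is a conjugate of `lamG G` -/
lemma exists_conj_eq {N : Subgroup (Equiv.Perm G)} (hreg : IsRegularSubgroup N)
    (φ : N ≃* G) : ∃ b : Equiv.Perm G, conjSub b (lamG G) = N := by
  classical
  set bf : G → G := fun g => ((φ.symm g : N) : Equiv.Perm G) 1 with hbf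
  have hinj : Function.Injective bf := by
    intro g g' h
    obtain ⟨η, hη, huniq⟩ := hreg 1 (bf g)
    have h1 : φ.symm g = η := huniq _ rfl
    have h2 : φ.symm g' = η := huniq _ h.symm
    have := h1.trans h2.symm
    simpa using congrArg φ this
  have hsurj : Function.Surjective bf := by
    intro y
    obtain ⟨η, hη, -⟩ := hreg 1 y
    refine ⟨φ η, ?_⟩
    rw [hbf]
    simp only [MulEquiv.symm_apply_apply]
    exact hη
  set b : Equiv.Perm G := Equiv.ofBijective bf ⟨hinj, hsurj⟩ with hb
  have key : ∀ g : G, b * (MulAction.toPermHom G G g) = ((φ.symm g : N) : Equiv.Perm G) * b := by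
    intro g
    ext x
    show bf (g * x) = (φ.symm g : Equiv.Perm G) (bf x)
    rw [hbf]
    simp only
    have : φ.symm (g * x) = φ.symm g * φ.symm x := map_mul _ _ _
    rw [this]
    rfl
  have key2 : ∀ g : G, b * (MulAction.toPermHom G G g) * b⁻¹ = ((φ.symm g : N) : Equiv.Perm G) := by
    intro g
    rw [key g]
    group
  refine ⟨b, ?_⟩
  ext ζ
  rw [mem_conjSub]
  constructor
  · rintro ⟨n, ⟨g, rfl⟩, rfl⟩
    rw [key2 g]
    exact (φ.symm g).2
  · intro hζ
    refine ⟨MulAction.toPermHom G G (φ ⟨ζ, hζ⟩), ⟨_, rfl⟩, ?_⟩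
    rw [key2]
    simp

lemma conjSub_inv_mem_SR {b : Equiv.Perm G}
    (h : conjSub b (lamG G) ∈ SClass G ∩ RClass G) :
    conjSub b⁻¹ (lamG G) ∈ SClass G ∩ RClass G := by
  obtain ⟨⟨-, -, hS⟩, ⟨-, -, hR⟩⟩ := h
  refine ⟨⟨isRegular_conjSub lamG_regular _, ⟨(conjSubIso b⁻¹ (lamG G)).symm.trans lamGIso⟩, ?_⟩,
    ⟨isRegular_conjSub lamG_regular _, ⟨(conjSubIso b⁻¹ (lamG G)).symm.trans lamGIso⟩, ?_⟩⟩
  · rw [normalizer_conjSub] at hR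
    have := conjSub_mono b⁻¹ _ _ hR
    rwa [conjSub_conjSub, inv_mul_cancel, conjSub_one] at this
  · have := conjSub_mono b⁻¹ _ _ hS
    rw [conjSub_conjSub, inv_mul_cancel, conjSub_one] at this
    rwa [normalizer_conjSub]

lemma conjSub_mem_SR_of_mem_Hol {h : Equiv.Perm G} (hh : h ∈ Hol G)
    {N : Subgroup (Equiv.Perm G)} (hN : N ∈ SClass G ∩ RClass G) :
    conjSub h N ∈ SClass G ∩ RClass G := by
  obtain ⟨⟨hreg, ⟨φ⟩, hS⟩, ⟨-, -, hR⟩⟩ := hN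
  refine ⟨⟨isRegular_conjSub hreg _, ⟨(conjSubIso h N).symm.trans φ⟩, ?_⟩,
    ⟨isRegular_conjSub hreg _, ⟨(conjSubIso h N).symm.trans φ⟩, ?_⟩⟩
  · have := conjSub_mono h _ _ hS
    rwa [conjSub_eq_self_iff.mpr (Subgroup.le_normalizer hh)] at this
  · rw [normalizer_conjSub]
    have := conjSub_mono h _ _ hR
    have he : conjSub h (lamG G) = lamG G := conjSub_eq_self_iff.mpr hh
    rwa [he] at this

end LamGAux

section TransversalAux
variable {B : Type*} [Group B] [Finite B]

lemma common_transversal (H : Subgroup B) (X : Set B)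
    (hXr : ∀ x ∈ X, ∀ h ∈ H, x * h ∈ X)
    (hXl : ∀ x ∈ X, ∀ h ∈ H, h * x ∈ X) :
    ∃ (t : ℕ) (β : Fin t → B),
      (∀ i, β i ∈ X) ∧
      (Function.Injective fun i => (QuotientGroup.mk (β i) : B ⧸ H)) ∧
      (∀ x ∈ X, ∃ i, (QuotientGroup.mk x : B ⧸ H) = QuotientGroup.mk (β i)) ∧
      (Function.Injective fun i => Quotient.mk (QuotientGroup.rightRel H) (β i)) ∧
      (∀ x ∈ X, ∃ i, Quotient.mk (QuotientGroup.rightRel H) x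
          = Quotient.mk (QuotientGroup.rightRel H) (β i)) := by
  classical
  have : Fintype B := Fintype.ofFinite B
  set πL : B → B ⧸ H := QuotientGroup.mk with hπL
  set πR : B → Quotient (QuotientGroup.rightRel H) := Quotient.mk _ with hπR
  have hL_eq : ∀ x b : B, πL x = πL b ↔ b⁻¹ * x ∈ H := by
    intro x b
    rw [hπL]
    constructor
    · intro h
      exact (QuotientGroup.eq.mp h.symm)
    · intro h
      exact (QuotientGroup.eq.mpr h).symm
  have hR_eq : ∀ x b : B, πR x = πR b ↔ x * b⁻¹ ∈ H := by
    intro x b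
    rw [hπR, Quotient.eq]
    have h1 := @QuotientGroup.rightRel_apply B _ H x b
    constructor
    · intro h
      have := H.inv_mem (h1.mp h)
      simpa [mul_inv_rev] using this
    · intro h
      apply h1.mpr
      have := H.inv_mem h
      simpa [mul_inv_rev] using this
  set hHf : Finset B := Finset.univ.filter (· ∈ H) with hhHf
  have hHpos : 0 < hHf.card := Finset.card_pos.mpr ⟨1, by simp [hhHf, H.one_mem]⟩
  -- fibers of πL and πR
  have fiberL : ∀ b : B, (Finset.univ.filter (fun x => πL x = πL b)).card = hHf.card := by
    intro b
    have himg : Finset.univ.filter (fun x => πL x = πL b) = hHf.image (fun h => b * h) := by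
      ext x
      simp only [Finset.mem_filter, Finset.mem_univ, true_and, Finset.mem_image, hhHf]
      rw [hL_eq]
      constructor
      · intro h
        exact ⟨b⁻¹ * x, by simpa using h, by group⟩
      · rintro ⟨h, hh, rfl⟩
        simpa using hh
    rw [himg, Finset.card_image_of_injective _ (mul_right_injective b)]
  have fiberR : ∀ b : B, (Finset.univ.filter (fun x => πR x = πR b)).card = hHf.card := by
    intro b
    have himg : Finset.univ.filter (fun x => πR x = πR b) = hHf.image (fun h => h * b) := by
      ext x
      simp only [Finset.mem_filter, Finset.mem_univ, true_and, Finset.mem_image, hhHf]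
      rw [hR_eq]
      constructor
      · intro h
        exact ⟨x * b⁻¹, by simpa using h, by group⟩
      · rintro ⟨h, hh, rfl⟩
        simpa using hh
    rw [himg, Finset.card_image_of_injective _ (mul_left_injective b)]
  -- Hall's condition
  set r : B ⧸ H → Finset (Quotient (QuotientGroup.rightRel H)) :=
    fun q => (Finset.univ.filter (fun x => πL x = q)).image πR with hr
  have hall : ∀ s : Finset (B ⧸ H), s.card ≤ (s.biUnion r).card := by
    intro s
    set U : Finset B := Finset.univ.filter (fun x => πL x ∈ s) with hU
    have hfib : ∀ q ∈ s, (U.filter (fun x => πL x = q)).card = hHf.card := by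
      intro q hq
      obtain ⟨b, rfl⟩ := QuotientGroup.mk_surjective q
      rw [← fiberL b]
      congr 1
      ext x
      simp only [hU, Finset.mem_filter, Finset.mem_univ, true_and, Finset.filter_filter]
      constructor
      · rintro ⟨-, h⟩; exact h
      · intro h; exact ⟨by rwa [h], h⟩
    have hUcard : U.card = s.card * hHf.card := by
      rw [Finset.card_eq_sum_card_fiberwise (f := πL) (s := U) (t := s)
        (fun x hx => (Finset.mem_filter.mp hx).2)]
      rw [Finset.sum_congr rfl hfib, Finset.sum_const, smul_eq_mul]
    have hUle : U.card ≤ (U.image πR).card * hHf.card := by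
      rw [Finset.card_eq_sum_card_fiberwise (f := πR) (t := U.image πR)
        (fun x hx => Finset.mem_image_of_mem _ hx)]
      calc ∑ v ∈ U.image πR, (U.filter (fun x => πR x = v)).card
          ≤ ∑ v ∈ U.image πR, hHf.card := by
            apply Finset.sum_le_sum
            intro v hv
            obtain ⟨a, _, rfl⟩ := Finset.mem_image.mp hv
            rw [← fiberR a]
            exact Finset.card_le_card (fun x hx => by
              simp only [Finset.mem_filter, Finset.mem_univ, true_and]
              exact (Finset.mem_filter.mp hx).2)
        _ = (U.image πR).card * hHf.card := by rw [Finset.sum_const, smul_eq_mul]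
    have himg : U.image πR ⊆ s.biUnion r := by
      intro v hv
      obtain ⟨a, ha, rfl⟩ := Finset.mem_image.mp hv
      have has : πL a ∈ s := (Finset.mem_filter.mp ha).2
      exact Finset.mem_biUnion.mpr ⟨πL a, has,
        Finset.mem_image_of_mem _ (by simp)⟩
    have := hUcard ▸ hUle
    have : s.card * hHf.card ≤ (s.biUnion r).card * hHf.card :=
      le_trans this (Nat.mul_le_mul_right _ (Finset.card_le_card himg))
    exact Nat.le_of_mul_le_mul_right this hHpos
  obtain ⟨f, hfinj, hfmem⟩ := (Finset.all_card_le_biUnion_card_iff_exists_injective r).mp hall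
  set XF : Finset B := Finset.univ.filter (· ∈ X) with hXF
  set Lf : Finset (B ⧸ H) := XF.image πL with hLf
  set Rf : Finset (Quotient (QuotientGroup.rightRel H)) := XF.image πR with hRf
  -- any element in the same left class as an element of X is in X
  have hXleft : ∀ b ∈ X, ∀ x : B, πL x = πL b → x ∈ X := by
    intro b hb x hx
    rw [hL_eq] at hx
    have := hXr b hb _ hx
    simpa using this
  have hXright : ∀ b ∈ X, ∀ x : B, πR x = πR b → x ∈ X := by
    intro b hb x hx
    rw [hR_eq] at hx
    have := hXl b hb _ hx
    simpa [mul_assoc] using this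
  -- cardinalities
  have hcardL : XF.card = Lf.card * hHf.card := by
    rw [Finset.card_eq_sum_card_fiberwise (f := πL) (t := Lf)
      (fun x hx => Finset.mem_image_of_mem _ hx)]
    rw [Finset.sum_congr rfl (g := fun _ => hHf.card) ?_, Finset.sum_const, smul_eq_mul]
    intro q hq
    obtain ⟨b, hb, rfl⟩ := Finset.mem_image.mp hq
    have hbX : b ∈ X := by simpa [hXF] using hb
    rw [← fiberL b]
    congr 1
    ext x
    simp only [hXF, Finset.mem_filter, Finset.mem_univ, true_and]
    constructor
    · rintro ⟨-, h⟩; exact h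
    · intro h; exact ⟨hXleft b hbX x h, h⟩
  have hcardR : XF.card = Rf.card * hHf.card := by
    rw [Finset.card_eq_sum_card_fiberwise (f := πR) (t := Rf)
      (fun x hx => Finset.mem_image_of_mem _ hx)]
    rw [Finset.sum_congr rfl (g := fun _ => hHf.card) ?_, Finset.sum_const, smul_eq_mul]
    intro q hq
    obtain ⟨b, hb, rfl⟩ := Finset.mem_image.mp hq
    have hbX : b ∈ X := by simpa [hXF] using hb
    rw [← fiberR b]
    congr 1
    ext x
    simp only [hXF, Finset.mem_filter, Finset.mem_univ, true_and]
    constructor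
    · rintro ⟨-, h⟩; exact h
    · intro h; exact ⟨hXright b hbX x h, h⟩
  have hLRcard : Lf.card = Rf.card :=
    Nat.eq_of_mul_eq_mul_right hHpos (hcardL ▸ hcardR)
  -- the chosen element of the fiber for each q
  have hchoice : ∀ q : B ⧸ H, ∃ a : B, πL a = q ∧ πR a = f q := by
    intro q
    have := hfmem q
    rw [hr] at this
    obtain ⟨a, ha, hfa⟩ := Finset.mem_image.mp this
    exact ⟨a, (Finset.mem_filter.mp ha).2, hfa⟩
  -- f maps Lf into Rf
  have hfLR : Lf.image f ⊆ Rf := by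
    intro v hv
    obtain ⟨q, hq, rfl⟩ := Finset.mem_image.mp hv
    obtain ⟨b, hb, rfl⟩ := Finset.mem_image.mp hq
    have hbX : b ∈ X := by simpa [hXF] using hb
    obtain ⟨a, haL, haR⟩ := hchoice (πL b)
    have haX : a ∈ X := hXleft b hbX a haL
    rw [← haR]
    exact Finset.mem_image_of_mem _ (by simpa [hXF] using haX)
  have hfLReq : Lf.image f = Rf := by
    apply Finset.eq_of_subset_of_card_le hfLR
    rw [Finset.card_image_of_injective _ hfinj, hLRcard]
  -- enumerate Lf
  set t := Lf.card with ht
  set e : {x // x ∈ Lf} ≃ Fin t := Lf.equivFin with he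
  set q : Fin t → B ⧸ H := fun i => (e.symm i : B ⧸ H) with hq
  have hqinj : Function.Injective q := by
    intro i j hij
    have : e.symm i = e.symm j := Subtype.ext hij
    exact e.symm.injective this
  have hqL : ∀ i, q i ∈ Lf := fun i => (e.symm i).2
  have hqsurj : ∀ p ∈ Lf, ∃ i, q i = p := by
    intro p hp
    exact ⟨e ⟨p, hp⟩, by simp [hq]⟩
  choose β hβL hβR using fun i => hchoice (q i)
  have hβX : ∀ i, β i ∈ X := by
    intro i
    obtain ⟨b, hb, hbq⟩ := Finset.mem_image.mp (hqL i)
    have hbX : b ∈ X := by simpa [hXF] using hb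
    exact hXleft b hbX (β i) (by rw [hβL i, hbq])
  refine ⟨t, β, hβX, ?_, ?_, ?_, ?_⟩
  · intro i j hij
    apply hqinj
    rw [← hβL i, ← hβL j]
    exact hij
  · intro x hx
    have : πL x ∈ Lf := Finset.mem_image_of_mem _ (by simpa [hXF] using hx)
    obtain ⟨i, hi⟩ := hqsurj _ this
    exact ⟨i, by rw [hβL i, hi]⟩
  · intro i j hij
    apply hqinj
    apply hfinj
    rw [← hβR i, ← hβR j]
    exact hij
  · intro x hx
    have hmem : πR x ∈ Rf := Finset.mem_image_of_mem _ (by simpa [hXF] using hx)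
    rw [← hfLReq] at hmem
    obtain ⟨p, hp, hfp⟩ := Finset.mem_image.mp hmem
    obtain ⟨i, rfl⟩ := hqsurj p hp
    exact ⟨i, by rw [hβR i, hfp]⟩

end TransversalAux

/-- There is a finite set `P = {β₁, …, β_t}` parameterizing `S(G) ∩ R(G)` which is a
simultaneous set of left and right coset representatives of `Hol(G)`, and which is
inv-closed up to a permutation `σ` of the indices. -/
theorem exists_parameterizing_transversal (G : Type*) [Group G] [Finite G] :
    ∃ (t : ℕ) (β : Fin t → Equiv.Perm G),
      -- (i) `i ↦ β_i λ(G) β_i⁻¹` is a bijection from the indices onto `S(G) ∩ R(G)`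
      (∀ i, conjSub (β i) (lamG G) ∈ SClass G ∩ RClass G) ∧
      (Function.Injective fun i => conjSub (β i) (lamG G)) ∧
      (∀ N ∈ SClass G ∩ RClass G, ∃ i, conjSub (β i) (lamG G) = N) ∧
      -- (ii) the left cosets are pairwise distinct, the right cosets are pairwise
      -- distinct, and the unions of the left and right cosets coincide
      (Function.Injective fun i => ({β i} : Set (Equiv.Perm G)) * (Hol G : Set (Equiv.Perm G))) ∧
      (Function.Injective fun i => (Hol G : Set (Equiv.Perm G)) * ({β i} : Set (Equiv.Perm G))) ∧
      (⋃ i, ({β i} : Set (Equiv.Perm G)) * (Hol G : Set (Equiv.Perm G)))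
        = (⋃ i, (Hol G : Set (Equiv.Perm G)) * ({β i} : Set (Equiv.Perm G))) ∧
      -- (iii) a permutation `σ` with `β_i⁻¹ λ(G) β_i = β_{σ(i)} λ(G) β_{σ(i)}⁻¹`
      (∃ σ : Equiv.Perm (Fin t),
        ∀ i, conjSub (β i)⁻¹ (lamG G) = conjSub (β (σ i)) (lamG G)) := by
  classical
  set X : Set (Equiv.Perm G) := {b | conjSub b (lamG G) ∈ SClass G ∩ RClass G} with hX
  have hXr : ∀ x ∈ X, ∀ h ∈ Hol G, x * h ∈ X := by
    intro x hx h hh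
    show conjSub (x * h) (lamG G) ∈ SClass G ∩ RClass G
    rw [← conjSub_conjSub, conjSub_eq_self_iff.mpr hh]
    exact hx
  have hXl : ∀ x ∈ X, ∀ h ∈ Hol G, h * x ∈ X := by
    intro x hx h hh
    show conjSub (h * x) (lamG G) ∈ SClass G ∩ RClass G
    rw [← conjSub_conjSub]
    exact conjSub_mem_SR_of_mem_Hol hh hx
  obtain ⟨t, β, hβX, hLinj, hLcov, hRinj, hRcov⟩ := common_transversal (Hol G) X hXr hXl
  -- translations between coset language and conjugation language
  have hL_eq : ∀ a b : Equiv.Perm G,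
      (QuotientGroup.mk a : Equiv.Perm G ⧸ Hol G) = QuotientGroup.mk b ↔ b⁻¹ * a ∈ Hol G := by
    intro a b
    constructor
    · intro h
      exact QuotientGroup.eq.mp h.symm
    · intro h
      exact (QuotientGroup.eq.mpr h).symm
  have hR_eq : ∀ a b : Equiv.Perm G,
      Quotient.mk (QuotientGroup.rightRel (Hol G)) a
        = Quotient.mk (QuotientGroup.rightRel (Hol G)) b ↔ a * b⁻¹ ∈ Hol G := by
    intro a b
    rw [Quotient.eq]
    have h1 := @QuotientGroup.rightRel_apply (Equiv.Perm G) _ (Hol G) a b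
    constructor
    · intro h
      have := (Hol G).inv_mem (h1.mp h)
      simpa [mul_inv_rev] using this
    · intro h
      apply h1.mpr
      have := (Hol G).inv_mem h
      simpa [mul_inv_rev] using this
  have key : ∀ a b : Equiv.Perm G, conjSub a (lamG G) = conjSub b (lamG G) ↔
      (QuotientGroup.mk a : Equiv.Perm G ⧸ Hol G) = QuotientGroup.mk b := by
    intro a b
    rw [conjSub_eq_conjSub_iff, hL_eq]
    rfl
  -- membership of left/right cosets as sets
  have memL : ∀ a x : Equiv.Perm G,
      x ∈ ({a} : Set (Equiv.Perm G)) * (Hol G : Set (Equiv.Perm G)) ↔ a⁻¹ * x ∈ Hol G := by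
    intro a x
    constructor
    · rintro ⟨y, rfl, z, hz, rfl⟩
      simpa [mul_assoc] using hz
    · intro h
      exact ⟨a, rfl, a⁻¹ * x, h, by group⟩
  have memR : ∀ a x : Equiv.Perm G,
      x ∈ (Hol G : Set (Equiv.Perm G)) * ({a} : Set (Equiv.Perm G)) ↔ x * a⁻¹ ∈ Hol G := by
    intro a x
    constructor
    · rintro ⟨z, hz, y, rfl, rfl⟩
      simpa using hz
    · intro h
      exact ⟨x * a⁻¹, h, a, rfl, by group⟩
  refine ⟨t, β, hβX, ?_, ?_, ?_, ?_, ?_, ?_⟩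
  · -- injectivity of conjugates
    intro i j hij
    exact hLinj ((key _ _).mp hij)
  · -- surjectivity onto S ∩ R
    intro N hN
    have hN' := hN
    obtain ⟨⟨hreg, ⟨φ⟩, -⟩, -⟩ := hN
    obtain ⟨b, hb⟩ := exists_conj_eq hreg φ
    have hbX : b ∈ X := by rw [hX]; simpa [Set.mem_setOf_eq, hb] using hN'
    obtain ⟨i, hi⟩ := hLcov b hbX
    refine ⟨i, ?_⟩
    rw [(key (β i) b).mpr hi.symm, hb]
  · -- left cosets pairwise distinct
    intro i j hij
    simp only at hij
    have : β i ∈ ({β j} : Set (Equiv.Perm G)) * (Hol G : Set (Equiv.Perm G)) := by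
      rw [← hij]
      exact (memL _ _).mpr (by simpa using (Hol G).one_mem)
    have := (memL _ _).mp this
    exact hLinj (((hL_eq _ _).mpr this))
  · -- right cosets pairwise distinct
    intro i j hij
    simp only at hij
    have : β i ∈ (Hol G : Set (Equiv.Perm G)) * ({β j} : Set (Equiv.Perm G)) := by
      rw [← hij]
      exact (memR _ _).mpr (by simpa using (Hol G).one_mem)
    have := (memR _ _).mp this
    exact hRinj (((hR_eq _ _).mpr this))
  · -- the unions agree (both are `X`)
    have hUL : (⋃ i, ({β i} : Set (Equiv.Perm G)) * (Hol G : Set (Equiv.Perm G))) = X := by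
      ext x
      simp only [Set.mem_iUnion]
      constructor
      · rintro ⟨i, hx⟩
        have := (memL _ _).mp hx
        have hx' : x = β i * ((β i)⁻¹ * x) := by group
        rw [hx']
        exact hXr _ (hβX i) _ this
      · intro hx
        obtain ⟨i, hi⟩ := hLcov x hx
        exact ⟨i, (memL _ _).mpr ((hL_eq _ _).mp hi)⟩
    have hUR : (⋃ i, (Hol G : Set (Equiv.Perm G)) * ({β i} : Set (Equiv.Perm G))) = X := by
      ext x
      simp only [Set.mem_iUnion]
      constructor
      · rintro ⟨i, hx⟩
        have := (memR _ _).mp hx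
        have hx' : x = (x * (β i)⁻¹) * β i := by group
        rw [hx']
        exact hXl _ (hβX i) _ this
      · intro hx
        obtain ⟨i, hi⟩ := hRcov x hx
        exact ⟨i, (memR _ _).mpr ((hR_eq _ _).mp hi)⟩
    rw [hUL, hUR]
  · -- the permutation σ
    have hinvX : ∀ i, (β i)⁻¹ ∈ X := fun i => conjSub_inv_mem_SR (hβX i)
    have hex : ∀ i, ∃ j, (QuotientGroup.mk ((β i)⁻¹) : Equiv.Perm G ⧸ Hol G)
        = QuotientGroup.mk (β j) := fun i => hLcov _ (hinvX i)
    choose σ' hσ' using hex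
    have hσinj : Function.Injective σ' := by
      intro i j hij
      apply hRinj
      have h1 := hσ' i
      have h2 := hσ' j
      rw [hij] at h1
      have h3 : (QuotientGroup.mk ((β i)⁻¹) : Equiv.Perm G ⧸ Hol G)
          = QuotientGroup.mk ((β j)⁻¹) := h1.trans h2.symm
      have h4 := (hL_eq _ _).mp h3
      -- h4 : (β j)⁻¹⁻¹ * (β i)⁻¹ ∈ Hol G
      apply (hR_eq _ _).mpr
      have := (Hol G).inv_mem h4
      simpa [mul_inv_rev] using this
    have hσbij : Function.Bijective σ' := Finite.injective_iff_bijective.mp hσinj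
    refine ⟨Equiv.ofBijective σ' hσbij, ?_⟩
    intro i
    exact (key _ _).mpr (hσ' i)
end

section
/- Let G be a finite group and suppose the members of S(G) ∩ R(G) are mutually normalizing, i.e. N ≤ Norm_B(M) for all N, M ∈ S(G) ∩ R(G). Let P ⊆ B be a set such that β ↦ β λ(G) β⁻¹ is a bijection from P onto S(G) ∩ R(G), and suppose P is inv-closed: for each β ∈ P there exists α ∈ P with β⁻¹ λ(G) β = α λ(G) α⁻¹. Then P is conj-closed: for all α, β ∈ P there exists γ ∈ P with α β λ(G) β⁻¹ α⁻¹ = γ λ(G) γ⁻¹. -/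
open Equiv Pointwise

lemma conjSub_mul {H : Type*} [Group H] (a b : H) (N : Subgroup H) :
    conjSub (a * b) N = conjSub a (conjSub b N) := by
  unfold conjSub
  rw [Subgroup.map_map]
  congr 1
  ext x
  simp [mul_assoc]

lemma conjSub_inv_conjSub {H : Type*} [Group H] (a : H) (N : Subgroup H) :
    conjSub a (conjSub a⁻¹ N) = N := by
  rw [← conjSub_mul, mul_inv_cancel]
  unfold conjSub
  ext x; simp

lemma conjSub_normalizer {H : Type*} [Group H] (a : H) (N : Subgroup H) :
    Subgroup.normalizer (conjSub a N : Set H) = conjSub a (Subgroup.normalizer (N : Set H)) :=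
  (Subgroup.map_equiv_normalizer_eq N (MulAut.conj a)).symm

lemma conjSub_mono_s5 {H : Type*} [Group H] (a : H) {N M : Subgroup H} (h : N ≤ M) :
    conjSub a N ≤ conjSub a M := Subgroup.map_mono h

lemma conjSub_regular {X : Type*} (a : Equiv.Perm X) {N : Subgroup (Equiv.Perm X)}
    (h : IsRegularSubgroup N) : IsRegularSubgroup (conjSub a N) := by
  intro x y
  obtain ⟨η, hη, huniq⟩ := h (a⁻¹ x) (a⁻¹ y)
  refine ⟨⟨a * η * a⁻¹, ⟨η, η.2, by simp [MulAut.conj_apply]⟩⟩, ?_, ?_⟩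
  · show (a * (η : Equiv.Perm X) * a⁻¹) x = y
    rw [Equiv.Perm.mul_apply, Equiv.Perm.mul_apply, hη]; simp
  · rintro ⟨ζ, n, hn, rfl⟩ hz
    have hnx : (n : Equiv.Perm X) (a⁻¹ x) = a⁻¹ y := by
      have : (a * n * a⁻¹) x = y := hz
      simp only [Equiv.Perm.mul_apply] at this
      rw [← this]; simp
    have := huniq ⟨n, hn⟩ hnx
    ext1
    rw [← this]
    rfl

lemma conjSub_mem_SR {G : Type*} [Group G]
    (hmut : ∀ N ∈ SClass G ∩ RClass G, ∀ M ∈ SClass G ∩ RClass G, N ≤ Subgroup.normalizer (M : Set (Equiv.Perm G)))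
    (a : Equiv.Perm G) (ha : conjSub a⁻¹ (lamG G) ∈ SClass G ∩ RClass G)
    {N : Subgroup (Equiv.Perm G)} (hN : N ∈ SClass G ∩ RClass G) :
    conjSub a N ∈ SClass G ∩ RClass G := by
  obtain ⟨⟨hreg, ⟨iso⟩, hS⟩, ⟨-, -, hR⟩⟩ := hN
  have hreg' : IsRegularSubgroup (conjSub a N) := conjSub_regular a hreg
  have hiso : Nonempty (conjSub a N ≃* G) :=
    ⟨((MulEquiv.subgroupMap (MulAut.conj a : Equiv.Perm G ≃* Equiv.Perm G) N).symm).trans iso⟩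
  have hS' : conjSub a N ≤ Hol G := by
    have h1 : N ≤ Subgroup.normalizer (conjSub a⁻¹ (lamG G) : Set (Equiv.Perm G)) :=
      hmut N ⟨⟨hreg, ⟨iso⟩, hS⟩, ⟨hreg, ⟨iso⟩, hR⟩⟩ _ ha
    calc conjSub a N ≤ conjSub a (Subgroup.normalizer (conjSub a⁻¹ (lamG G) : Set (Equiv.Perm G))) := conjSub_mono_s5 a h1
      _ = Subgroup.normalizer (conjSub a (conjSub a⁻¹ (lamG G)) : Set (Equiv.Perm G)) := (conjSub_normalizer a _).symm
      _ = Hol G := by rw [conjSub_inv_conjSub]; rfl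
  have hR' : lamG G ≤ Subgroup.normalizer (conjSub a N : Set (Equiv.Perm G)) := by
    have h1 : conjSub a⁻¹ (lamG G) ≤ Subgroup.normalizer (N : Set (Equiv.Perm G)) :=
      hmut _ ha N ⟨⟨hreg, ⟨iso⟩, hS⟩, ⟨hreg, ⟨iso⟩, hR⟩⟩
    calc lamG G = conjSub a (conjSub a⁻¹ (lamG G)) := (conjSub_inv_conjSub a _).symm
      _ ≤ conjSub a (Subgroup.normalizer (N : Set (Equiv.Perm G))) := conjSub_mono_s5 a h1
      _ = Subgroup.normalizer (conjSub a N : Set (Equiv.Perm G)) := (conjSub_normalizer a N).symm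
  exact ⟨⟨hreg', hiso, hS'⟩, ⟨hreg', hiso, hR'⟩⟩

/-- If the members of `S(G) ∩ R(G)` are mutually normalizing and `P` is an inv-closed
parameterizing set for `S(G) ∩ R(G)`, then `P` is conj-closed. -/
theorem conjClosed_of_invClosed (G : Type*) [Group G] [Finite G]
    (hmut : ∀ N ∈ SClass G ∩ RClass G, ∀ M ∈ SClass G ∩ RClass G, N ≤ Subgroup.normalizer (M : Set (Equiv.Perm G)))
    (P : Set (Equiv.Perm G))
    (hbij : Set.BijOn (fun b => conjSub b (lamG G)) P (SClass G ∩ RClass G))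
    (hinv : ∀ b ∈ P, ∃ a ∈ P, conjSub b⁻¹ (lamG G) = conjSub a (lamG G)) :
    ∀ a ∈ P, ∀ b ∈ P, ∃ c ∈ P, conjSub (a * b) (lamG G) = conjSub c (lamG G) := by
  intro a ha b hb
  obtain ⟨a', ha', heq⟩ := hinv a ha
  have hainv : conjSub a⁻¹ (lamG G) ∈ SClass G ∩ RClass G := by
    rw [heq]; exact hbij.mapsTo ha'
  have hNb : conjSub b (lamG G) ∈ SClass G ∩ RClass G := hbij.mapsTo hb
  have hmem : conjSub (a * b) (lamG G) ∈ SClass G ∩ RClass G := by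
    rw [conjSub_mul]
    exact conjSub_mem_SR hmut a hainv hNb
  obtain ⟨c, hc, hceq⟩ := hbij.surjOn hmem
  exact ⟨c, hc, hceq.symm⟩
end
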